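/- Let $M$ be a weight sequence with $p! \prec M$ (i.e., for every $H>0$ there is $C_H>0$ with $p! \leq C_H H^p M_p$ for all $p$). Then $\omega_M^\star(s) \leq \omega_{M^*}(1/s)$ for all $s > 0$, where $M^*_p = M_p/p!$ and $\omega_M^\star(s) = \sup_{t\geq 0}\{\omega_M(t) - ts\}$. -/

import Mathlib

lemma pow_le_factorial_mul_exp (x : ℝ) (hx : 0 ≤ x) (p : ℕ) :
    x ^ p ≤ (p.factorial : ℝ) * Real.exp x := by
  have h1 : x ^ p / p.factorial ≤ Real.exp x := by
    calc x ^ p / p.factorial ≤ ∑ i ∈ Finset.range (p + 1), x ^ i / i.factorial := by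
          exact Finset.single_le_sum (f := fun i => x ^ i / (i.factorial : ℝ))
            (fun i _ => by positivity) (Finset.self_mem_range_succ p)
      _ ≤ Real.exp x := Real.sum_le_exp_of_nonneg hx _
  have hf : (0 : ℝ) < p.factorial := by positivity
  calc x ^ p = (x ^ p / p.factorial) * p.factorial := by field_simp
    _ ≤ Real.exp x * p.factorial := by
        exact mul_le_mul_of_nonneg_right h1 hf.le
    _ = (p.factorial : ℝ) * Real.exp x := by ring

/-- For a weight sequence `M` with `p! ≺ M`, the Legendre transform of the associated
function satisfies `ω_M⋆(s) ≤ ω_{M*}(1/s)` for all `s > 0`, where `M*_p = M_p/p!`. -/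
theorem stmt_7 (M : ℕ → ℝ) (hpos : ∀ p, 0 < M p) (h0 : M 0 = 1)
    (hinc : ∀ p : ℕ, 1 ≤ p → M p / M (p - 1) ≤ M (p + 1) / M p)
    (hlim : Filter.Tendsto (fun p => M (p + 1) / M p) Filter.atTop Filter.atTop)
    (hNA : ∀ H : ℝ, 0 < H → ∃ C : ℝ, 0 < C ∧ ∀ p : ℕ, (p.factorial : ℝ) ≤ C * H ^ p * M p) :
    ∀ s : ℝ, 0 < s →
      sSup {y : ℝ | ∃ t : ℝ, 0 ≤ t ∧ y = (⨆ p : ℕ, Real.log (t ^ p / M p)) - t * s} ≤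
        ⨆ p : ℕ, Real.log ((1 / s) ^ p / (M p / p.factorial)) := by
  intro s hs
  set g : ℕ → ℝ := fun p => Real.log ((1 / s) ^ p / (M p / p.factorial)) with hg
  -- g is bounded above using (NA) with H = s
  obtain ⟨C, hC, hCle⟩ := hNA s hs
  have hgbdd : BddAbove (Set.range g) := by
    refine ⟨Real.log C, ?_⟩
    rintro _ ⟨p, rfl⟩
    have hMp := hpos p
    have hfp : (0 : ℝ) < p.factorial := by positivity
    have h1 : (1 / s) ^ p / (M p / p.factorial) ≤ C := by
      have e : (1 / s) ^ p / (M p / p.factorial) = p.factorial / (s ^ p * M p) := by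
        field_simp
        rw [← mul_pow, one_div, inv_mul_cancel₀ hs.ne', one_pow]
      rw [e, div_le_iff₀ (by positivity)]
      nlinarith [hCle p]
    exact Real.log_le_log (by positivity) h1 |>.trans (le_refl _)
  have hg0 : (0:ℝ) ≤ ⨆ p, g p := by
    have : g 0 ≤ ⨆ p, g p := le_ciSup hgbdd 0
    simpa [hg, h0] using this
  apply csSup_le
  · exact ⟨(⨆ p : ℕ, Real.log ((0:ℝ) ^ p / M p)) - 0 * s, 0, le_refl 0, rfl⟩
  · rintro y ⟨t, ht, rfl⟩
    have hts : 0 ≤ t * s := mul_nonneg ht hs.le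
    rw [sub_le_iff_le_add]
    refine Real.iSup_le (fun p => ?_) (by linarith)
    have hgle : g p ≤ ⨆ q, g q := le_ciSup hgbdd p
    rcases eq_or_lt_of_le ht with h | htpos
    · rcases Nat.eq_zero_or_pos p with rfl | hp
      · simp only [pow_zero, h0, div_one, Real.log_one]
        linarith
      · rw [← h, zero_pow (by omega), zero_div, Real.log_zero]
        linarith
    · -- t > 0 : log(t^p/M_p) ≤ t*s + g p
      have hMp := hpos p
      have hfp : (0 : ℝ) < p.factorial := by positivity
      have key : t ^ p / M p ≤ Real.exp (t * s) * ((1 / s) ^ p / (M p / p.factorial)) := by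
        have h1 : (t * s) ^ p ≤ (p.factorial : ℝ) * Real.exp (t * s) :=
          pow_le_factorial_mul_exp _ hts p
        have h2 : Real.exp (t * s) * ((1 / s) ^ p / (M p / p.factorial))
            = (p.factorial : ℝ) * Real.exp (t * s) / (s ^ p * M p) := by
          field_simp
          ring
          rw [← mul_pow, mul_inv_cancel₀ hs.ne', one_pow]
        rw [h2, div_le_div_iff₀ hMp (by positivity)]
        calc t ^ p * (s ^ p * M p) = (t * s) ^ p * M p := by rw [mul_pow]; ring
          _ ≤ (p.factorial : ℝ) * Real.exp (t * s) * M p :=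
              mul_le_mul_of_nonneg_right h1 hMp.le
      have hlog := Real.log_le_log (by positivity) key
      rw [Real.log_mul (Real.exp_ne_zero _) (by positivity), Real.log_exp] at hlog
      calc Real.log (t ^ p / M p) ≤ t * s + g p := hlog
        _ ≤ (⨆ q, g q) + t * s := by linarith
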